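/- Let T be a finite tree with at least two vertices, equipped with an edge-length function ℓ assigning a strictly positive real length to each edge, and suppose (T, ℓ) is short-branched. Then for every vertex v of T, the sum over all leaves w of T of the barycentric coordinates a(v,w) equals 1. -/

import Mathlib

open scoped Classical
open Finset

noncomputable section

variable {V : Type*}

/-- A leaf of a graph is a vertex of degree one. -/
def IsLeafVertex [Fintype V] (G : SimpleGraph V) (v : V) : Prop := G.degree v = 1

/-- The finset of leaves of a graph. -/
def leafSet [Fintype V] (G : SimpleGraph V) : Finset V :=
  Finset.univ.filter (fun v => IsLeafVertex G v)

/-- The length of a pseudometric graph: the sum of the lengths of its edges. -/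
def totalLength [Fintype V] (G : SimpleGraph V) (ℓ : Sym2 V → ℝ) : ℝ :=
  ∑ e ∈ G.edgeFinset, ℓ e

/-- The leaf length of a tree: one less than its number of leaves. -/
def leafLength [Fintype V] (G : SimpleGraph V) : ℝ := ((leafSet G).card : ℝ) - 1

/-- `sideComp G u v` is the vertex set of the connected component containing `v` of the
graph obtained from `G` by deleting the vertex `u`: the set of vertices reachable from
`v` by a walk avoiding `u`. -/
def sideComp (G : SimpleGraph V) (u v : V) : Set V :=
  {x | ∃ p : G.Walk v x, u ∉ p.support}

/-- The length of the subspace `T(u,v)`: the sum of the lengths of all edges having at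
least one endpoint in `sideComp G u v`. -/
def sideLength [Fintype V] (G : SimpleGraph V) (ℓ : Sym2 V → ℝ) (u v : V) : ℝ :=
  ∑ e ∈ G.edgeFinset.filter (fun e => ∃ x ∈ e, x ∈ sideComp G u v), ℓ e

/-- The leaf length of the subspace `T(u,v)`: the number of leaves of `G` lying in
`sideComp G u v`. -/
def sideLeafCount [Fintype V] (G : SimpleGraph V) (u v : V) : ℕ :=
  ((leafSet G).filter (fun x => x ∈ sideComp G u v)).card

/-- The deviation `D(u,v)`: the leaf length of `T(u,v)` minus the length of `T(u,v)`. -/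
def deviation [Fintype V] (G : SimpleGraph V) (ℓ : Sym2 V → ℝ) (u v : V) : ℝ :=
  (sideLeafCount G u v : ℝ) - sideLength G ℓ u v

/-- The length of the branch at `(u,w)`: `ℓ {u,w}` plus the sum of the lengths of all
edges with both endpoints in `sideComp G u w`. -/
def branchLength [Fintype V] (G : SimpleGraph V) (ℓ : Sym2 V → ℝ) (u w : V) : ℝ :=
  ℓ s(u, w) + ∑ e ∈ G.edgeFinset.filter (fun e => ∀ x ∈ e, x ∈ sideComp G u w), ℓ e

/-- A pseudometric tree is short-branched if its length equals its leaf length and the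
length of every branch (at a vertex of degree at least 3) is at most its leaf length. -/
def ShortBranched [Fintype V] (G : SimpleGraph V) (ℓ : Sym2 V → ℝ) : Prop :=
  totalLength G ℓ = leafLength G ∧
  ∀ u w : V, 3 ≤ G.degree u → G.Adj u w →
    branchLength G ℓ u w ≤ (sideLeafCount G u w : ℝ)

/-- The product of the factors `D(vᵢ, vᵢ₊₁)/(1 − D(vᵢ₊₁, vᵢ))` along a list of vertices;
applied to the support of the unique path from `v` to `w` this gives the barycentric
coordinate `a(v,w)`. -/
def pathProd [Fintype V] (G : SimpleGraph V) (ℓ : Sym2 V → ℝ) : List V → ℝ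
  | a :: b :: rest =>
      (deviation G ℓ a b / (1 - deviation G ℓ b a)) * pathProd G ℓ (b :: rest)
  | _ => 1

namespace BaryAux

variable {G : SimpleGraph V}

/-- The unique path between two vertices of a tree. -/
noncomputable def uPath (hT : G.IsTree) (a b : V) : G.Walk a b :=
  (hT.existsUnique_path a b).exists.choose

lemma uPath_isPath (hT : G.IsTree) (a b : V) : (uPath hT a b).IsPath :=
  (hT.existsUnique_path a b).exists.choose_spec

lemma uPath_eq (hT : G.IsTree) {a b : V} (q : G.Walk a b) (hq : q.IsPath) :
    q = uPath hT a b :=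
  ((hT.existsUnique_path a b).unique hq (uPath_isPath hT a b))

lemma uPath_self (hT : G.IsTree) (a : V) : uPath hT a a = SimpleGraph.Walk.nil := by
  have h : (uPath hT a a).IsPath := uPath_isPath hT a a
  have := SimpleGraph.Path.loop_eq (⟨uPath hT a a, h⟩ : G.Path a a)
  simpa [SimpleGraph.Path.nil] using congrArg Subtype.val this

lemma mem_sideComp_iff (hT : G.IsTree) {u v x : V} :
    x ∈ sideComp G u v ↔ u ∉ (uPath hT v x).support := by
  constructor
  · rintro ⟨W, hW⟩
    have hb : W.bypass.IsPath := W.bypass_isPath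
    have := uPath_eq hT W.bypass hb
    rw [← this]
    exact fun h => hW (W.support_bypass_subset h)
  · intro h
    exact ⟨uPath hT v x, h⟩

lemma not_mem_sideComp_self (u v : V) : u ∉ sideComp G u v := by
  rintro ⟨W, hW⟩
  exact hW W.end_mem_support

lemma base_mem_sideComp {u v : V} (h : u ≠ v) : v ∈ sideComp G u v :=
  ⟨SimpleGraph.Walk.nil, by simp [h]⟩

/-- all vertices on a walk avoiding u from v are in the component. -/
lemma mem_sideComp_of_mem_support {u v x z : V} (q : G.Walk v x) (hq : u ∉ q.support)
    (hz : z ∈ q.support) : z ∈ sideComp G u v := by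
  refine ⟨q.takeUntil z hz, fun h => hq ?_⟩
  exact q.support_takeUntil_subset hz h

lemma adj_extend {u v x y : V} (hx : x ∈ sideComp G u v) (hxy : G.Adj x y) (hy : y ≠ u) :
    y ∈ sideComp G u v := by
  obtain ⟨W, hW⟩ := hx
  refine ⟨W.concat hxy, ?_⟩
  rw [SimpleGraph.Walk.support_concat]
  simp only [List.mem_append, List.mem_singleton]
  rintro (h | h)
  · exact hW h
  · exact hy h.symm

/-- if `x` is in the `y`-side of `b` with `b ~ y`, the unique path from `b` to `x`
starts with the edge to `y`. -/
lemma uPath_cons (hT : G.IsTree) {b y x : V} (h : G.Adj b y) (hx : x ∈ sideComp G b y) :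
    uPath hT b x = SimpleGraph.Walk.cons h (uPath hT y x) := by
  have hb : b ∉ (uPath hT y x).support := (mem_sideComp_iff hT).1 hx
  exact (uPath_eq hT _ ((uPath_isPath hT y x).cons hb)).symm

/-- distinct neighbors of `u` have disjoint side components. -/
lemma sideComp_disjoint_of_ne (hT : G.IsTree) {u a b : V} (ha : G.Adj u a) (hb : G.Adj u b)
    (hab : a ≠ b) : ∀ x, x ∈ sideComp G u a → x ∉ sideComp G u b := by
  intro x hxa hxb
  have h1 := uPath_cons hT ha hxa
  have h2 := uPath_cons hT hb hxb
  rw [h1] at h2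
  have := congrArg (fun w => w.support) h2
  simp only [SimpleGraph.Walk.support_cons] at this
  have : a = b := by
    have h3 := congrArg List.tail this
    simp only [List.tail_cons] at h3
    rw [(uPath hT a x).support_eq_cons, (uPath hT b x).support_eq_cons] at h3
    exact (List.cons_eq_cons.1 h3).1
  exact hab this

/-- a neighbor of `u` lying in the side component of another neighbor is equal to it. -/
lemma eq_of_adj_mem_sideComp (hT : G.IsTree) {u a v : V} (ha : G.Adj u a) (hv : G.Adj u v)
    (h : a ∈ sideComp G u v) : a = v := by
  by_contra hne
  exact sideComp_disjoint_of_ne hT ha hv hne a (base_mem_sideComp ha.ne) h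

/-- every vertex other than `u` is in the side component of some neighbor of `u`. -/
lemma exists_neighbor_sideComp (hT : G.IsTree) {u x : V} (hx : x ≠ u) :
    ∃ y, G.Adj u y ∧ x ∈ sideComp G u y := by
  obtain ⟨y, hadj, q, hq⟩ := SimpleGraph.Walk.exists_eq_cons_of_ne hx.symm (uPath hT u x)
  have hp : (uPath hT u x).IsPath := uPath_isPath hT u x
  rw [hq] at hp
  have hqp : q.IsPath := hp.of_cons
  have hu : u ∉ q.support := by
    have := hp.support_nodup
    simp only [SimpleGraph.Walk.support_cons, List.nodup_cons] at this
    exact this.1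
  exact ⟨y, hadj, ⟨q, hu⟩⟩

end BaryAux
namespace BaryAux
variable {G : SimpleGraph V}

/-- for adjacent `u v`, the two side components are disjoint. -/
lemma sideComp_adj_disjoint (hT : G.IsTree) {u v : V} (huv : G.Adj u v) :
    ∀ x, x ∈ sideComp G u v → x ∉ sideComp G v u := by
  intro x hx hx'
  have h1 : u ∉ (uPath hT v x).support := (mem_sideComp_iff hT).1 hx
  have h2 : v ∉ (uPath hT u x).support := (mem_sideComp_iff hT).1 hx'
  have : uPath hT u x = SimpleGraph.Walk.cons huv (uPath hT v x) :=
    (uPath_eq hT _ ((uPath_isPath hT v x).cons h1)).symm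
  rw [this] at h2
  simp only [SimpleGraph.Walk.support_cons, List.mem_cons] at h2
  exact h2 (Or.inr (uPath hT v x).start_mem_support)

/-- for distinct `u v`, the two side components cover everything. -/
lemma sideComp_cover (hT : G.IsTree) {u v : V} (huv : u ≠ v) (x : V) :
    x ∈ sideComp G u v ∨ x ∈ sideComp G v u := by
  by_cases h : u ∈ (uPath hT v x).support
  · right
    set q := uPath hT v x with hq
    refine ⟨q.dropUntil u h, fun hv' => ?_⟩
    have hnd := (uPath_isPath hT v x).support_nodup
    have hspec := q.take_spec h
    have hsup : q.support = (q.takeUntil u h).support ++ (q.dropUntil u h).support.tail := by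
      rw [← SimpleGraph.Walk.support_append, hspec]
    rw [hsup] at hnd
    have hvt : v ∈ (q.takeUntil u h).support := (q.takeUntil u h).start_mem_support
    have hvd : v ∈ (q.dropUntil u h).support.tail := by
      have := (q.dropUntil u h).support_eq_cons
      rw [this] at hv'
      rcases List.mem_cons.1 hv' with h1 | h1
      · exact absurd h1 huv.symm
      · exact h1
    exact (List.disjoint_of_nodup_append hnd) hvt hvd
  · left
    exact ⟨uPath hT v x, h⟩

/-- decomposition of a side component at its root. -/
lemma sideComp_decomp (hT : G.IsTree) {u v : V} (huv : G.Adj u v) (x : V) :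
    x ∈ sideComp G u v ↔ x = v ∨ ∃ y, G.Adj v y ∧ y ≠ u ∧ x ∈ sideComp G v y := by
  constructor
  · intro hx
    by_cases hxv : x = v
    · exact Or.inl hxv
    · obtain ⟨y, hy, hxy⟩ := exists_neighbor_sideComp hT (u := v) hxv
      refine Or.inr ⟨y, hy, fun hyu => ?_, hxy⟩
      -- if y = u then x ∈ sideComp v u, contradicting x ∈ sideComp u v
      subst hyu
      exact sideComp_adj_disjoint hT huv x hx hxy
  · rintro (rfl | ⟨y, hvy, hyu, hxy⟩)
    · exact base_mem_sideComp huv.ne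
    · -- walk from v to x through y avoiding u
      obtain ⟨q, hq⟩ := hxy
      refine ⟨SimpleGraph.Walk.cons hvy q, ?_⟩
      simp only [SimpleGraph.Walk.support_cons, List.mem_cons]
      rintro (h1 | h1)
      · exact huv.ne h1
      · -- u ∈ q.support would put u in sideComp v y, but u ∈ sideComp v u
        have hu : u ∈ sideComp G v y := mem_sideComp_of_mem_support q hq h1
        exact sideComp_disjoint_of_ne hT huv.symm hvy (Ne.symm hyu) u
          (base_mem_sideComp huv.ne') hu

/-- nesting: if `a ~ w`, `a ~ b`, `w ≠ b` then `sideComp a w ⊆ sideComp b a`. -/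
lemma sideComp_nested (hT : G.IsTree) {a w b : V} (haw : G.Adj a w) (hab : G.Adj a b)
    (hwb : w ≠ b) : ∀ x, x ∈ sideComp G a w → x ∈ sideComp G b a := by
  intro x hx
  exact (sideComp_decomp hT hab.symm x).2 (Or.inr ⟨w, haw, hwb, hx⟩)

end BaryAux
namespace BaryAux
variable [Fintype V] {G : SimpleGraph V}

lemma edge_endpoint (hT : G.IsTree) {u v a b : V} (huv : G.Adj u v) (hab : G.Adj a b)
    (ha : a ∈ sideComp G u v) : (b = u ∧ a = v) ∨ b ∈ sideComp G u v := by
  by_cases hb : b = u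
  · subst hb
    exact Or.inl ⟨rfl, eq_of_adj_mem_sideComp hT hab.symm huv ha⟩
  · exact Or.inr (adj_extend ha hab hb)

lemma filter_side_eq (hT : G.IsTree) {u v : V} (huv : G.Adj u v) :
    G.edgeFinset.filter (fun e => ∃ x ∈ e, x ∈ sideComp G u v) =
      insert s(u, v) (G.edgeFinset.filter (fun e => ∀ x ∈ e, x ∈ sideComp G u v)) := by
  ext e
  induction e using Sym2.ind with
  | _ a b =>
    simp only [Finset.mem_filter, Finset.mem_insert, Sym2.mem_iff, SimpleGraph.mem_edgeFinset,
      SimpleGraph.mem_edgeSet, Sym2.eq_iff]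
    constructor
    · rintro ⟨hab, x, (rfl | rfl), hx⟩
      · rcases edge_endpoint hT huv hab hx with ⟨rfl, rfl⟩ | hb
        · exact Or.inl (Or.inr ⟨rfl, rfl⟩)
        · refine Or.inr ⟨hab, ?_⟩
          rintro y (rfl | rfl) <;> assumption
      · rcases edge_endpoint hT huv hab.symm hx with ⟨rfl, rfl⟩ | hb
        · exact Or.inl (Or.inl ⟨rfl, rfl⟩)
        · refine Or.inr ⟨hab, ?_⟩
          rintro y (rfl | rfl) <;> assumption
    · rintro ((⟨rfl, rfl⟩ | ⟨rfl, rfl⟩) | ⟨hab, hall⟩)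
      · exact ⟨huv, b, Or.inr rfl, base_mem_sideComp huv.ne⟩
      · exact ⟨huv.symm, a, Or.inl rfl, base_mem_sideComp huv.ne⟩
      · exact ⟨hab, a, Or.inl rfl, hall a (Or.inl rfl)⟩

lemma edge_not_mem_inner {u v : V} :
    s(u, v) ∉ G.edgeFinset.filter (fun e => ∀ x ∈ e, x ∈ sideComp G u v) := by
  simp only [Finset.mem_filter, Sym2.mem_iff, not_and, not_forall]
  intro _
  exact ⟨u, by simp, not_mem_sideComp_self u v⟩

lemma sideLength_eq_branchLength (hT : G.IsTree) {ℓ : Sym2 V → ℝ} {u v : V}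
    (huv : G.Adj u v) : sideLength G ℓ u v = branchLength G ℓ u v := by
  rw [sideLength, branchLength, filter_side_eq hT huv,
    Finset.sum_insert edge_not_mem_inner]

lemma edge_filter_disjoint (hT : G.IsTree) {u x y : V} (hx : G.Adj u x) (hy : G.Adj u y)
    (hxy : x ≠ y) :
    Disjoint (G.edgeFinset.filter (fun e => ∃ z ∈ e, z ∈ sideComp G u x))
      (G.edgeFinset.filter (fun e => ∃ z ∈ e, z ∈ sideComp G u y)) := by
  rw [Finset.disjoint_left]
  intro e he1 he2
  induction e using Sym2.ind with
  | _ a b =>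
    simp only [Finset.mem_filter, Sym2.mem_iff, SimpleGraph.mem_edgeFinset,
      SimpleGraph.mem_edgeSet] at he1 he2
    obtain ⟨hab, z1, hz1, hz1'⟩ := he1
    obtain ⟨-, z2, hz2, hz2'⟩ := he2
    by_cases hzz : z1 = z2
    · subst hzz
      exact sideComp_disjoint_of_ne hT hx hy hxy z1 hz1' hz2'
    · have hadj : G.Adj z1 z2 := by
        rcases hz1 with rfl | rfl <;> rcases hz2 with rfl | rfl <;>
          first | exact hab | exact hab.symm | exact absurd rfl hzz
      have hz2u : z2 ≠ u := fun h => not_mem_sideComp_self u y (h ▸ hz2')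
      exact sideComp_disjoint_of_ne hT hx hy hxy z2 (adj_extend hz1' hadj hz2u) hz2'

lemma edge_cover (hT : G.IsTree) (u : V) :
    G.edgeFinset = (G.neighborFinset u).biUnion
      (fun x => G.edgeFinset.filter (fun e => ∃ z ∈ e, z ∈ sideComp G u x)) := by
  ext e
  constructor
  · intro he
    induction e using Sym2.ind with
    | _ a b =>
      have hab : G.Adj a b := by simpa using he
      rw [Finset.mem_biUnion]
      by_cases ha : a = u
      · obtain ⟨y, hy, hby⟩ := exists_neighbor_sideComp hT (u := u) (x := b)
          (by rw [← ha]; exact hab.ne.symm)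
        exact ⟨y, by simpa using hy, Finset.mem_filter.2 ⟨he, b, by simp, hby⟩⟩
      · obtain ⟨y, hy, hay⟩ := exists_neighbor_sideComp hT (u := u) (x := a) ha
        exact ⟨y, by simpa using hy, Finset.mem_filter.2 ⟨he, a, by simp, hay⟩⟩
  · intro he
    rw [Finset.mem_biUnion] at he
    obtain ⟨x, -, hx⟩ := he
    exact (Finset.mem_filter.1 hx).1

lemma sum_sideLength (hT : G.IsTree) (ℓ : Sym2 V → ℝ) (u : V) :
    ∑ x ∈ G.neighborFinset u, sideLength G ℓ u x = totalLength G ℓ := by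
  have h : (↑(G.neighborFinset u) : Set V).PairwiseDisjoint
      (fun x => G.edgeFinset.filter (fun e => ∃ z ∈ e, z ∈ sideComp G u x)) := by
    intro x hx y hy hxy
    simp only [Finset.mem_coe, SimpleGraph.mem_neighborFinset] at hx hy
    exact edge_filter_disjoint hT hx hy hxy
  simp only [sideLength]
  rw [← Finset.sum_biUnion h, totalLength, ← edge_cover hT u]

lemma leaf_filter_disjoint (hT : G.IsTree) {u x y : V} (hx : G.Adj u x) (hy : G.Adj u y)
    (hxy : x ≠ y) :
    Disjoint ((leafSet G).filter (fun w => w ∈ sideComp G u x))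
      ((leafSet G).filter (fun w => w ∈ sideComp G u y)) := by
  rw [Finset.disjoint_left]
  intro w hw1 hw2
  exact sideComp_disjoint_of_ne hT hx hy hxy w (Finset.mem_filter.1 hw1).2
    (Finset.mem_filter.1 hw2).2

lemma leaf_cover [DecidableEq V] (hT : G.IsTree) (u : V) :
    (leafSet G).erase u = (G.neighborFinset u).biUnion
      (fun x => (leafSet G).filter (fun w => w ∈ sideComp G u x)) := by
  ext w
  constructor
  · intro hw
    obtain ⟨hwu, hwl⟩ := Finset.mem_erase.1 hw
    obtain ⟨y, hy, hwy⟩ := exists_neighbor_sideComp hT hwu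
    exact Finset.mem_biUnion.2 ⟨y, by simpa using hy, Finset.mem_filter.2 ⟨hwl, hwy⟩⟩
  · intro hw
    obtain ⟨x, -, hx⟩ := Finset.mem_biUnion.1 hw
    obtain ⟨hwl, hwx⟩ := Finset.mem_filter.1 hx
    exact Finset.mem_erase.2 ⟨fun h => not_mem_sideComp_self u x (by rw [h] at hwx; exact hwx), hwl⟩

lemma sum_sideLeafCount (hT : G.IsTree) (u : V) :
    ∑ x ∈ G.neighborFinset u, (sideLeafCount G u x : ℝ) =
      ((leafSet G).card : ℝ) - (if IsLeafVertex G u then 1 else 0) := by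
  have hcard : ∑ x ∈ G.neighborFinset u, sideLeafCount G u x = ((leafSet G).erase u).card := by
    rw [leaf_cover hT u, Finset.card_biUnion]
    · rfl
    · intro x hx y hy hxy
      simp only [Finset.mem_coe, SimpleGraph.mem_neighborFinset] at hx hy
      exact leaf_filter_disjoint hT hx hy hxy
  rw [← Nat.cast_sum, hcard]
  by_cases hu : IsLeafVertex G u
  · have hmem : u ∈ leafSet G := Finset.mem_filter.2 ⟨Finset.mem_univ u, hu⟩
    rw [Finset.card_erase_of_mem hmem, if_pos hu]
    have : 1 ≤ (leafSet G).card := Finset.card_pos.2 ⟨u, hmem⟩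
    push_cast [this]
    ring
  · have hmem : u ∉ leafSet G := fun h => hu (Finset.mem_filter.1 h).2
    rw [Finset.erase_eq_of_notMem hmem, if_neg hu]
    ring

lemma sumD (hT : G.IsTree) {ℓ : Sym2 V → ℝ} (hsb1 : totalLength G ℓ = leafLength G) (u : V) :
    ∑ x ∈ G.neighborFinset u, deviation G ℓ u x =
      1 - (if IsLeafVertex G u then 1 else 0) := by
  simp only [deviation]
  rw [Finset.sum_sub_distrib, sum_sideLeafCount hT u, sum_sideLength hT ℓ u, hsb1, leafLength]
  ring

end BaryAux
namespace BaryAux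
variable [Fintype V] {G : SimpleGraph V} {ℓ : Sym2 V → ℝ}

lemma leaf_pair (hT : G.IsTree) {u v : V} (huv : G.Adj u v) :
    sideLeafCount G u v + sideLeafCount G v u = (leafSet G).card := by
  rw [sideLeafCount, sideLeafCount]
  have h : (leafSet G).filter (fun x => x ∈ sideComp G v u) =
      (leafSet G).filter (fun x => ¬ x ∈ sideComp G u v) := by
    ext w
    simp only [Finset.mem_filter, and_congr_right_iff]
    intro _
    constructor
    · intro h1 h2
      exact sideComp_adj_disjoint hT huv w h2 h1
    · intro h1
      rcases sideComp_cover hT huv.ne w with h2 | h2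
      · exact absurd h2 h1
      · exact h2
  rw [h]
  exact Finset.card_filter_add_card_filter_not _

lemma edge_filter_pair_union (hT : G.IsTree) {u v : V} (huv : G.Adj u v) :
    (G.edgeFinset.filter (fun e => ∃ z ∈ e, z ∈ sideComp G u v)) ∪
      (G.edgeFinset.filter (fun e => ∃ z ∈ e, z ∈ sideComp G v u)) = G.edgeFinset := by
  rw [← Finset.filter_or]
  apply Finset.filter_true_of_mem
  intro e he
  induction e using Sym2.ind with
  | _ a b =>
    rcases sideComp_cover hT huv.ne a with h | h
    · exact Or.inl ⟨a, Sym2.mem_mk_left a b, h⟩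
    · exact Or.inr ⟨a, Sym2.mem_mk_left a b, h⟩

lemma edge_filter_pair_inter (hT : G.IsTree) {u v : V} (huv : G.Adj u v) :
    (G.edgeFinset.filter (fun e => ∃ z ∈ e, z ∈ sideComp G u v)) ∩
      (G.edgeFinset.filter (fun e => ∃ z ∈ e, z ∈ sideComp G v u)) = {s(u, v)} := by
  ext e
  simp only [Finset.mem_inter, Finset.mem_singleton]
  constructor
  · intro ⟨h1, h2⟩
    induction e using Sym2.ind with
    | _ a b =>
      obtain ⟨hab, z1, hz1, hz1'⟩ := by
        simpa only [Finset.mem_filter, Sym2.mem_iff, SimpleGraph.mem_edgeFinset,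
          SimpleGraph.mem_edgeSet] using h1
      obtain ⟨-, z2, hz2, hz2'⟩ := by
        simpa only [Finset.mem_filter, Sym2.mem_iff, SimpleGraph.mem_edgeFinset,
          SimpleGraph.mem_edgeSet] using h2
      have hzz : z1 ≠ z2 := by
        rintro rfl
        exact sideComp_adj_disjoint hT huv z1 hz1' hz2'
      have hadj : G.Adj z1 z2 := by
        rcases hz1 with rfl | rfl <;> rcases hz2 with rfl | rfl <;>
          first | exact hab | exact hab.symm | exact absurd rfl hzz
      rcases edge_endpoint hT huv hadj hz1' with ⟨rfl, rfl⟩ | hmem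
      · have : s(a, b) = s(z1, z2) := by
          rcases hz1 with rfl | rfl <;> rcases hz2 with rfl | rfl <;>
            first | rfl | exact Sym2.eq_swap | exact absurd rfl hzz
        rw [this, Sym2.eq_swap]
      · exact absurd hmem fun hm => sideComp_adj_disjoint hT huv z2 hm hz2'
  · rintro rfl
    constructor
    · exact Finset.mem_filter.2 ⟨SimpleGraph.mem_edgeFinset.2 huv, v, Sym2.mem_mk_right u v,
        base_mem_sideComp huv.ne⟩
    · exact Finset.mem_filter.2 ⟨SimpleGraph.mem_edgeFinset.2 huv, u, Sym2.mem_mk_left u v,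
        base_mem_sideComp huv.ne'⟩

lemma sideLength_pair (hT : G.IsTree) (ℓ : Sym2 V → ℝ) {u v : V} (huv : G.Adj u v) :
    sideLength G ℓ u v + sideLength G ℓ v u = totalLength G ℓ + ℓ s(u, v) := by
  have h : (∑ e ∈ (G.edgeFinset.filter (fun e => ∃ z ∈ e, z ∈ sideComp G u v)) ∪
        (G.edgeFinset.filter (fun e => ∃ z ∈ e, z ∈ sideComp G v u)), ℓ e) +
      ∑ e ∈ (G.edgeFinset.filter (fun e => ∃ z ∈ e, z ∈ sideComp G u v)) ∩
        (G.edgeFinset.filter (fun e => ∃ z ∈ e, z ∈ sideComp G v u)), ℓ e =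
      (∑ e ∈ G.edgeFinset.filter (fun e => ∃ z ∈ e, z ∈ sideComp G u v), ℓ e) +
      ∑ e ∈ G.edgeFinset.filter (fun e => ∃ z ∈ e, z ∈ sideComp G v u), ℓ e :=
    Finset.sum_union_inter
  rw [edge_filter_pair_union hT huv, edge_filter_pair_inter hT huv, Finset.sum_singleton] at h
  have h2 : sideLength G ℓ u v + sideLength G ℓ v u =
      (∑ e ∈ G.edgeFinset.filter (fun e => ∃ z ∈ e, z ∈ sideComp G u v), ℓ e) +
      ∑ e ∈ G.edgeFinset.filter (fun e => ∃ z ∈ e, z ∈ sideComp G v u), ℓ e := rfl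
  rw [h2, ← h, totalLength]

lemma devB (hT : G.IsTree) (hsb1 : totalLength G ℓ = leafLength G) {u v : V} (huv : G.Adj u v) :
    deviation G ℓ u v + deviation G ℓ v u = 1 - ℓ s(u, v) := by
  simp only [deviation]
  have h1 := leaf_pair hT huv
  have h2 := sideLength_pair hT ℓ huv
  have h1' : (sideLeafCount G u v : ℝ) + (sideLeafCount G v u : ℝ) = ((leafSet G).card : ℝ) := by
    exact_mod_cast congrArg (Nat.cast : ℕ → ℝ) h1
  rw [hsb1, leafLength] at h2
  linarith

lemma deg_one_neighbor {a b : V} (h1 : G.degree a = 1) (hab : G.Adj a b) :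
    G.neighborFinset a = {b} := by
  have hb : b ∈ G.neighborFinset a := (SimpleGraph.mem_neighborFinset G a b).2 hab
  obtain ⟨c, hc⟩ := Finset.card_eq_one.1 h1
  rw [hc] at hb ⊢
  rw [Finset.mem_singleton.1 hb]

lemma dev_leaf_zero (hT : G.IsTree) (hsb1 : totalLength G ℓ = leafLength G) {a b : V}
    (h1 : G.degree a = 1) (hab : G.Adj a b) : deviation G ℓ a b = 0 := by
  have hs := sumD hT hsb1 a
  rw [deg_one_neighbor h1 hab, Finset.sum_singleton, if_pos (show IsLeafVertex G a from h1)] at hs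
  linarith

lemma devF (hT : G.IsTree) (hℓ : ∀ e ∈ G.edgeSet, 0 < ℓ e) (hsb : ShortBranched G ℓ) :
    ∀ n : ℕ, ∀ a b : V, G.Adj a b →
      (Finset.univ.filter (fun x => x ∈ sideComp G b a)).card ≤ n →
      0 < deviation G ℓ a b + ℓ s(a, b) := by
  intro n
  induction n using Nat.strong_induction_on with
  | _ n IH =>
    intro a b hab hcard
    haveI := Classical.decEq V
    have hℓab : 0 < ℓ s(a, b) := hℓ _ ((G.mem_edgeSet).2 hab)
    by_cases h1 : G.degree a = 1
    · rw [dev_leaf_zero hT hsb.1 h1 hab]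
      linarith
    by_cases h3 : 3 ≤ G.degree a
    · have hb := hsb.2 a b h3 hab
      have heq := sideLength_eq_branchLength hT (ℓ := ℓ) hab
      have hnn : 0 ≤ deviation G ℓ a b := by
        rw [deviation, heq]
        linarith
      linarith
    -- degree 2 case
    · have hge : 1 ≤ G.degree a := by
        rw [← SimpleGraph.card_neighborFinset_eq_degree]
        exact Finset.card_pos.2 ⟨b, (SimpleGraph.mem_neighborFinset G a b).2 hab⟩
      have h2 : G.degree a = 2 := by omega
      have hcard2 : (G.neighborFinset a).card = 2 := by
        rw [SimpleGraph.card_neighborFinset_eq_degree]; exact h2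
      obtain ⟨x, y, hxy, hset⟩ := Finset.card_eq_two.1 hcard2
      have hbmem : b ∈ G.neighborFinset a := (SimpleGraph.mem_neighborFinset G a b).2 hab
      -- let w be the other neighbor
      obtain ⟨w, hwb, hwset⟩ : ∃ w, w ≠ b ∧ G.neighborFinset a = {b, w} := by
        rw [hset] at hbmem
        rcases Finset.mem_insert.1 hbmem with rfl | hby
        · exact ⟨y, hxy.symm, hset⟩
        · rw [Finset.mem_singleton] at hby
          subst hby
          exact ⟨x, hxy, by rw [hset, Finset.pair_comm]⟩
      have haw : G.Adj a w := by
        have : w ∈ G.neighborFinset a := by rw [hwset]; simp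
        exact (SimpleGraph.mem_neighborFinset G a w).1 this
      have hsum := sumD hT hsb.1 a
      rw [hwset, Finset.sum_pair (Ne.symm hwb),
        if_neg (show ¬ IsLeafVertex G a from h1)] at hsum
      have hBw := devB hT hsb.1 haw
      -- IH applied to (w, a)
      have hsub : Finset.univ.filter (fun z => z ∈ sideComp G a w) ⊂
          Finset.univ.filter (fun z => z ∈ sideComp G b a) := by
        refine Finset.ssubset_iff_of_subset ?_ |>.2 ?_
        · intro z hz
          simp only [Finset.mem_filter, Finset.mem_univ, true_and] at hz ⊢
          exact sideComp_nested hT haw hab hwb z hz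
        · refine ⟨a, ?_, ?_⟩
          · simp only [Finset.mem_filter, Finset.mem_univ, true_and]
            exact base_mem_sideComp hab.ne'
          · simp only [Finset.mem_filter, Finset.mem_univ, true_and]
            exact not_mem_sideComp_self a w
      have hlt : (Finset.univ.filter (fun z => z ∈ sideComp G a w)).card < n :=
        lt_of_lt_of_le (Finset.card_lt_card hsub) hcard
      have hIH := IH _ hlt w a haw.symm le_rfl
      rw [Sym2.eq_swap (a := w) (b := a)] at hIH
      linarith

end BaryAux
namespace BaryAux
variable [Fintype V] {G : SimpleGraph V} {ℓ : Sym2 V → ℝ}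

lemma sumH (hT : G.IsTree) (hℓ : ∀ e ∈ G.edgeSet, 0 < ℓ e) (hsb : ShortBranched G ℓ) :
    ∀ n : ℕ, ∀ u b : V, G.Adj u b →
      (Finset.univ.filter (fun x => x ∈ sideComp G u b)).card ≤ n →
      ∑ w ∈ (leafSet G).filter (fun w => w ∈ sideComp G u b),
        pathProd G ℓ (uPath hT b w).support = 1 - deviation G ℓ b u := by
  intro n
  induction n using Nat.strong_induction_on with
  | _ n IH =>
    intro u b hub hcard
    by_cases h1 : G.degree b = 1
    · -- leaf case
      have hnb : G.neighborFinset b = {u} := deg_one_neighbor h1 hub.symm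
      have hD : deviation G ℓ b u = 0 := dev_leaf_zero hT hsb.1 h1 hub.symm
      have hset : (leafSet G).filter (fun w => w ∈ sideComp G u b) = {b} := by
        ext w
        simp only [Finset.mem_filter, Finset.mem_singleton]
        constructor
        · rintro ⟨hwl, hw⟩
          rcases (sideComp_decomp hT hub w).1 hw with rfl | ⟨y, hy, hyu, -⟩
          · rfl
          · exfalso
            have hymem : y ∈ G.neighborFinset b := (SimpleGraph.mem_neighborFinset G b y).2 hy
            rw [hnb, Finset.mem_singleton] at hymem
            exact hyu hymem
        · rintro rfl
          exact ⟨Finset.mem_filter.2 ⟨Finset.mem_univ w, h1⟩, base_mem_sideComp hub.ne⟩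
      rw [hset, Finset.sum_singleton, uPath_self hT b, hD, SimpleGraph.Walk.support_nil]
      norm_num [pathProd]
    · -- internal case
      have hbleaf : ¬ IsLeafVertex G b := h1
      have hcover : (leafSet G).filter (fun w => w ∈ sideComp G u b) =
          ((G.neighborFinset b).erase u).biUnion
            (fun y => (leafSet G).filter (fun w => w ∈ sideComp G b y)) := by
        ext w
        simp only [Finset.mem_biUnion, Finset.mem_filter, Finset.mem_erase,
          SimpleGraph.mem_neighborFinset]
        constructor
        · rintro ⟨hwl, hw⟩
          rcases (sideComp_decomp hT hub w).1 hw with rfl | ⟨y, hy, hyu, hwy⟩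
          · exact absurd (Finset.mem_filter.1 hwl).2 hbleaf
          · exact ⟨y, ⟨hyu, hy⟩, hwl, hwy⟩
        · rintro ⟨y, ⟨hyu, hy⟩, hwl, hwy⟩
          exact ⟨hwl, (sideComp_decomp hT hub w).2 (Or.inr ⟨y, hy, hyu, hwy⟩)⟩
      have hdisj : (↑((G.neighborFinset b).erase u) : Set V).PairwiseDisjoint
          (fun y => (leafSet G).filter (fun w => w ∈ sideComp G b y)) := by
        intro x hx y hy hxy
        simp only [Finset.mem_coe, Finset.mem_erase, SimpleGraph.mem_neighborFinset] at hx hy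
        exact leaf_filter_disjoint hT hx.2 hy.2 hxy
      rw [hcover, Finset.sum_biUnion hdisj]
      have hterm : ∀ y ∈ (G.neighborFinset b).erase u,
          ∑ w ∈ (leafSet G).filter (fun w => w ∈ sideComp G b y),
            pathProd G ℓ (uPath hT b w).support = deviation G ℓ b y := by
        intro y hy
        obtain ⟨hyu, hyadj⟩ := Finset.mem_erase.1 hy
        rw [SimpleGraph.mem_neighborFinset] at hyadj
        have hstep : ∀ w ∈ (leafSet G).filter (fun w => w ∈ sideComp G b y),
            pathProd G ℓ (uPath hT b w).support =
              (deviation G ℓ b y / (1 - deviation G ℓ y b)) *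
                pathProd G ℓ (uPath hT y w).support := by
          intro w hw
          have hwy := (Finset.mem_filter.1 hw).2
          rw [uPath_cons hT hyadj hwy, SimpleGraph.Walk.support_cons,
            (uPath hT y w).support_eq_cons]
          rfl
        rw [Finset.sum_congr rfl hstep, ← Finset.mul_sum]
        have hsub : Finset.univ.filter (fun z => z ∈ sideComp G b y) ⊂
            Finset.univ.filter (fun z => z ∈ sideComp G u b) := by
          refine Finset.ssubset_iff_of_subset ?_ |>.2 ?_
          · intro z hz
            simp only [Finset.mem_filter, Finset.mem_univ, true_and] at hz ⊢
            exact sideComp_nested hT hyadj hub.symm hyu z hz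
          · refine ⟨b, ?_, ?_⟩
            · simp only [Finset.mem_filter, Finset.mem_univ, true_and]
              exact base_mem_sideComp hub.ne
            · simp only [Finset.mem_filter, Finset.mem_univ, true_and]
              exact not_mem_sideComp_self b y
        have hlt := lt_of_lt_of_le (Finset.card_lt_card hsub) hcard
        rw [IH _ hlt b y hyadj le_rfl]
        have hpos : 0 < deviation G ℓ b y + ℓ s(b, y) :=
          devF hT hℓ hsb _ b y hyadj le_rfl
        have hB := devB hT hsb.1 hyadj
        have hne : 1 - deviation G ℓ y b ≠ 0 := by
          have h12 : 1 - deviation G ℓ y b = deviation G ℓ b y + ℓ s(b, y) := by linarith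
          rw [h12]
          linarith
        exact div_mul_cancel₀ _ hne
      rw [Finset.sum_congr rfl hterm]
      have hsum := sumD hT hsb.1 b
      rw [if_neg hbleaf] at hsum
      have hu : u ∈ G.neighborFinset b := (SimpleGraph.mem_neighborFinset G b u).2 hub.symm
      rw [← Finset.add_sum_erase _ _ hu] at hsum
      linarith

end BaryAux
/-- **The barycentric coordinates sum to one** (Lemma A.8 of the paper): in a
short-branched tree with strictly positive edge lengths, for any vertex `v`, the sum over
all leaves `w` of the barycentric coordinates `a(v,w)`, computed along the unique paths
from `v` to the leaves, equals `1`. -/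
theorem sum_barycentric_coordinates [Fintype V] [DecidableEq V] (G : SimpleGraph V)
    (ℓ : Sym2 V → ℝ) (hT : G.IsTree) (hV : 1 < Fintype.card V)
    (hℓ : ∀ e ∈ G.edgeSet, 0 < ℓ e) (hsb : ShortBranched G ℓ)
    (v : V) (p : ∀ w : V, G.Walk v w) (hp : ∀ w, (p w).IsPath) :
    ∑ w ∈ leafSet G, pathProd G ℓ (p w).support = 1 := by
  have hpw : ∀ w, p w = BaryAux.uPath hT v w := fun w => BaryAux.uPath_eq hT (p w) (hp w)
  have hcover := BaryAux.leaf_cover hT v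
  have hdisj : (↑(G.neighborFinset v) : Set V).PairwiseDisjoint
      (fun x => (leafSet G).filter (fun w => w ∈ sideComp G v x)) := by
    intro x hx y hy hxy
    simp only [Finset.mem_coe, SimpleGraph.mem_neighborFinset] at hx hy
    exact BaryAux.leaf_filter_disjoint hT hx hy hxy
  have hterm : ∀ x ∈ G.neighborFinset v,
      ∑ w ∈ (leafSet G).filter (fun w => w ∈ sideComp G v x),
        pathProd G ℓ (p w).support = deviation G ℓ v x := by
    intro x hx
    rw [SimpleGraph.mem_neighborFinset] at hx
    have hstep : ∀ w ∈ (leafSet G).filter (fun w => w ∈ sideComp G v x),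
        pathProd G ℓ (p w).support =
          (deviation G ℓ v x / (1 - deviation G ℓ x v)) *
            pathProd G ℓ (BaryAux.uPath hT x w).support := by
      intro w hw
      have hwx := (Finset.mem_filter.1 hw).2
      rw [hpw w, BaryAux.uPath_cons hT hx hwx, SimpleGraph.Walk.support_cons,
        (BaryAux.uPath hT x w).support_eq_cons]
      rfl
    rw [Finset.sum_congr rfl hstep, ← Finset.mul_sum,
      BaryAux.sumH hT hℓ hsb _ v x hx le_rfl]
    have hpos := BaryAux.devF hT hℓ hsb _ v x hx le_rfl
    have hB := BaryAux.devB hT hsb.1 hx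
    have hne : 1 - deviation G ℓ x v ≠ 0 := by
      have h12 : 1 - deviation G ℓ x v = deviation G ℓ v x + ℓ s(v, x) := by linarith
      rw [h12]; linarith
    exact div_mul_cancel₀ _ hne
  have hsplit : ∑ w ∈ leafSet G, pathProd G ℓ (p w).support =
      (if IsLeafVertex G v then 1 else 0) +
        ∑ w ∈ (leafSet G).erase v, pathProd G ℓ (p w).support := by
    by_cases hv : IsLeafVertex G v
    · have hvm : v ∈ leafSet G := Finset.mem_filter.2 ⟨Finset.mem_univ v, hv⟩
      rw [if_pos hv, ← Finset.add_sum_erase _ _ hvm]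
      congr 1
      have hnil : p v = SimpleGraph.Walk.nil := by
        rw [hpw v, BaryAux.uPath_self hT v]
      rw [hnil, SimpleGraph.Walk.support_nil]
      norm_num [pathProd]
    · have hvm : v ∉ leafSet G := fun h => hv (Finset.mem_filter.1 h).2
      rw [if_neg hv, Finset.erase_eq_of_notMem hvm, zero_add]
  rw [hsplit, hcover, Finset.sum_biUnion hdisj, Finset.sum_congr rfl hterm,
    BaryAux.sumD hT hsb.1 v]
  ring
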